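/- Let F be a field of characteristic different from 2 and suppose a = x² + y² for some x, y ∈ F^×, with a not a square in F. Let E = F(√a), σ the nontrivial element of Gal(E/F), and let δ ∈ E^× satisfy σ(δ)/δ ∈ E^{×2} and N_{E/F}(δ) ∈ a·F^{×2}. Then σ acts trivially on E^×/E^{×2} (i.e. σ(e)/e ∈ E^{×2} for all e ∈ E^×) if and only if every e ∈ E^× can be written e = f·δ^ε·u² with f ∈ F^×, ε ∈ {0,1}, u ∈ E^×. (This is the case n = 1 of condition (3) in the paper's Theorem 3 for p = 2: H^1(E) is trivial iff H^1(E) = res H^1(F) + (δ) ∪ res H^0(F).) -/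

import Mathlib

/-- Let `F` be a field of characteristic different from 2, `a = x² + y²` with
`x, y ∈ F^×` and `a` not a square, `E = F(√a)`, `σ` the nontrivial element of `Gal(E/F)`, and
`δ ∈ E^×` with `σ(δ)/δ ∈ E^{×2}` and `N_{E/F}(δ) ∈ a·F^{×2}`.  Then `σ` acts trivially on
`E^×/E^{×2}` if and only if every `e ∈ E^×` can be written `e = f·δ^ε·u²` with `f ∈ F^×`,
`ε ∈ {0,1}`, `u ∈ E^×`. -/
theorem trivial_action_iff_generated_by_delta
    {F E : Type*} [Field F] [Field E] [Algebra F E]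
    (hchar : (2 : F) ≠ 0)
    (a x y : F) (hx : x ≠ 0) (hy : y ≠ 0) (haxy : a = x ^ 2 + y ^ 2)
    (hns : ∀ f : F, f ^ 2 ≠ a)
    (α : E) (hα : α ^ 2 = algebraMap F E a)
    (hgen : Algebra.adjoin F {α} = ⊤)
    (σ : E ≃ₐ[F] E) (hσ : σ ≠ 1)
    (δ : E) (hδ0 : δ ≠ 0)
    (hδfix : ∃ u : E, u ≠ 0 ∧ σ δ / δ = u ^ 2)
    (hδnorm : ∃ f : F, f ≠ 0 ∧ Algebra.norm F δ = a * f ^ 2) :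
    (∀ e : E, e ≠ 0 → ∃ u : E, u ≠ 0 ∧ σ e / e = u ^ 2) ↔
      (∀ e : E, e ≠ 0 → ∃ f : F, ∃ ε : Fin 2, ∃ u : E, f ≠ 0 ∧ u ≠ 0 ∧
        e = algebraMap F E f * δ ^ (ε : ℕ) * u ^ 2) := by
  have hA : Function.Injective (algebraMap F E) := (algebraMap F E).injective
  have ha0 : a ≠ 0 := by intro h; exact hns 0 (by simp [h])
  have hα0 : α ≠ 0 := by
    intro h
    apply ha0
    apply hA
    rw [map_zero, ← hα, h]
    ring
  have h2E : (2 : E) ≠ 0 := by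
    intro h
    apply hchar
    apply hA
    rw [map_ofNat, map_zero]
    exact h
  -- every element of E is p + q·α
  have decomp : ∀ e : E, ∃ p q : F, e = algebraMap F E p + algebraMap F E q * α := by
    intro e
    have he : e ∈ Algebra.adjoin F {α} := hgen.symm ▸ Algebra.mem_top
    induction he using Algebra.adjoin_induction with
    | mem z hz =>
        exact ⟨0, 1, by simp [Set.mem_singleton_iff.mp hz]⟩
    | algebraMap r => exact ⟨r, 0, by simp⟩
    | add z w hz hw ihz ihw =>
        obtain ⟨p, q, hp⟩ := ihz
        obtain ⟨r, s, hr⟩ := ihw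
        exact ⟨p + r, q + s, by rw [hp, hr, map_add, map_add]; ring⟩
    | mul z w hz hw ihz ihw =>
        obtain ⟨p, q, hp⟩ := ihz
        obtain ⟨r, s, hr⟩ := ihw
        refine ⟨p * r + q * s * a, p * s + q * r, ?_⟩
        rw [hp, hr, map_add, map_mul, map_mul, map_add, map_mul, map_mul, map_mul]
        linear_combination (algebraMap F E q * algebraMap F E s) * hα
  -- σ α = -α
  have hσα : σ α = -α := by
    have hsq : (σ α - α) * (σ α + α) = 0 := by
      have h1 : σ α ^ 2 = α ^ 2 := by
        rw [← map_pow, hα, AlgEquiv.commutes, ← hα]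
      linear_combination h1
    rcases mul_eq_zero.mp hsq with h | h
    · exfalso
      apply hσ
      apply AlgEquiv.ext
      intro e
      obtain ⟨p, q, hpq⟩ := decomp e
      have hfix : σ α = α := sub_eq_zero.mp h
      rw [hpq, map_add, map_mul, AlgEquiv.commutes, AlgEquiv.commutes, hfix]
      simp
    · exact eq_neg_of_add_eq_zero_left h
  -- formula for σ
  have hσf : ∀ p q : F, σ (algebraMap F E p + algebraMap F E q * α)
      = algebraMap F E p - algebraMap F E q * α := by
    intro p q
    rw [map_add, map_mul, AlgEquiv.commutes, AlgEquiv.commutes, hσα]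
    ring
  -- fixed elements are in F
  have hfixed : ∀ e : E, σ e = e → ∃ p : F, e = algebraMap F E p := by
    intro e he
    obtain ⟨p, q, hpq⟩ := decomp e
    rw [hpq, hσf] at he
    have hq : algebraMap F E q * α * 2 = 0 := by linear_combination -he
    have hq0 : q = 0 := by
      rcases mul_eq_zero.mp hq with h | h
      · rcases mul_eq_zero.mp h with h' | h'
        · exact hA (by simpa using h')
        · exact absurd h' hα0
      · exact absurd h h2E
    exact ⟨p, by rw [hpq, hq0]; simp⟩
  -- σ is an involution
  have hσσ : ∀ e : E, σ (σ e) = e := by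
    intro e
    obtain ⟨p, q, hpq⟩ := decomp e
    have hrw : algebraMap F E p - algebraMap F E q * α
        = algebraMap F E p + algebraMap F E (-q) * α := by rw [map_neg]; ring
    rw [hpq, hσf, hrw, hσf, map_neg]
    ring
  -- basis 1, α
  have hli : LinearIndependent F ![(1 : E), α] := by
    rw [LinearIndependent.pair_iff]
    intro s t hst
    have hst' : algebraMap F E s + algebraMap F E t * α = 0 := by
      rw [Algebra.smul_def, Algebra.smul_def] at hst
      rw [← hst]; ring
    by_cases ht : t = 0
    · subst ht
      have hs : s = 0 := by
        apply hA
        simpa using hst'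
      exact ⟨hs, rfl⟩
    · exfalso
      apply hns (-s / t)
      have hAt : algebraMap F E t ≠ 0 := fun h => ht (hA (by rw [h, map_zero]))
      have hαv : α = algebraMap F E (-s / t) := by
        rw [map_div₀, map_neg]
        rw [eq_div_iff hAt]
        linear_combination hst'
      apply hA
      rw [map_pow, ← hαv, hα]
  have hsp : ⊤ ≤ Submodule.span F (Set.range ![(1 : E), α]) := by
    intro e _
    obtain ⟨p, q, hpq⟩ := decomp e
    have h1 : (1 : E) ∈ Set.range ![(1 : E), α] := ⟨0, rfl⟩
    have h2 : α ∈ Set.range ![(1 : E), α] := ⟨1, rfl⟩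
    have hpq' : e = p • (1 : E) + q • α := by
      rw [hpq, Algebra.smul_def, Algebra.smul_def]; ring
    rw [hpq']
    exact Submodule.add_mem _ (Submodule.smul_mem _ _ (Submodule.subset_span h1))
      (Submodule.smul_mem _ _ (Submodule.subset_span h2))
  let b : Module.Basis (Fin 2) F E := Module.Basis.mk hli hsp
  have hb0 : b 0 = 1 := by simp [b]
  have hb1 : b 1 = α := by simp [b]
  haveI : Module.Finite F E := Module.Finite.of_basis b
  have hrepr : ∀ s t : F, b.repr (s • (1 : E) + t • α)
      = Finsupp.single 0 s + Finsupp.single 1 t := by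
    intro s t
    rw [← hb0, ← hb1, map_add, map_smul, map_smul, b.repr_self, b.repr_self,
      Finsupp.smul_single, Finsupp.smul_single, smul_eq_mul, smul_eq_mul, mul_one, mul_one]
  obtain ⟨p, q, hδpq⟩ := decomp δ
  obtain ⟨f0, hf00, hnv⟩ := hδnorm
  have hδ1 : δ * b 0 = p • (1 : E) + q • α := by
    rw [hb0, mul_one, hδpq, Algebra.smul_def, Algebra.smul_def]
    ring
  have hδ2 : δ * b 1 = (q * a) • (1 : E) + p • α := by
    rw [hb1, hδpq, Algebra.smul_def, Algebra.smul_def, map_mul]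
    linear_combination (algebraMap F E q) * hα
  have hnorm : Algebra.norm F δ = p ^ 2 - a * q ^ 2 := by
    rw [Algebra.norm_eq_matrix_det b, Matrix.det_fin_two,
      Algebra.leftMulMatrix_eq_repr_mul, Algebra.leftMulMatrix_eq_repr_mul,
      Algebra.leftMulMatrix_eq_repr_mul, Algebra.leftMulMatrix_eq_repr_mul,
      hδ1, hδ2, hrepr, hrepr]
    simp [Finsupp.single_apply]
    ring
  have hδσδ : δ * σ δ = (α * algebraMap F E f0) ^ 2 := by
    have h1 : σ δ = algebraMap F E p - algebraMap F E q * α := by rw [hδpq, hσf]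
    have h2 : p ^ 2 - a * q ^ 2 = a * f0 ^ 2 := by rw [← hnorm]; exact hnv
    have h3 : (algebraMap F E p) ^ 2 - algebraMap F E a * (algebraMap F E q) ^ 2
        = algebraMap F E a * (algebraMap F E f0) ^ 2 := by
      have := congrArg (algebraMap F E) h2
      simpa [map_sub, map_mul, map_pow] using this
    rw [h1, hδpq]
    linear_combination h3 - ((algebraMap F E q) ^ 2 + (algebraMap F E f0) ^ 2) * hα
  obtain ⟨v, hv0, hvdiv⟩ := hδfix
  have hσδ : σ δ = δ * v ^ 2 := by rw [← hvdiv]; field_simp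
  have hδv0 : δ * v ≠ 0 := mul_ne_zero hδ0 hv0
  have hσδv : σ (δ * v) = -(δ * v) := by
    have hsq : (δ * v - α * algebraMap F E f0) * (δ * v + α * algebraMap F E f0) = 0 := by
      linear_combination hδσδ - δ * hσδ
    rcases mul_eq_zero.mp hsq with h | h
    · have h' : δ * v = α * algebraMap F E f0 := sub_eq_zero.mp h
      rw [h', map_mul, hσα, AlgEquiv.commutes]
      ring
    · have h' : δ * v = -(α * algebraMap F E f0) := eq_neg_of_add_eq_zero_left h
      rw [h', map_neg, map_mul, hσα, AlgEquiv.commutes]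
      ring
  have hNv : v * σ v = -1 := by
    have h1 : σ δ * σ v = -(δ * v) := by rw [← map_mul]; exact hσδv
    rw [hσδ] at h1
    have h2 : (δ * v) * (v * σ v) = (δ * v) * (-1) := by linear_combination h1
    exact mul_left_cancel₀ hδv0 h2
  -- Hilbert 90 for degree 2
  have hilbert : ∀ u : E, u ≠ 0 → u * σ u = 1 → ∃ c : E, c ≠ 0 ∧ σ c = u * c := by
    intro u hu hN
    by_cases h1 : u = -1
    · exact ⟨α, hα0, by rw [hσα, h1]; ring⟩
    · have h10 : 1 + u ≠ 0 := by
        intro h0; apply h1; linear_combination h0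
      have hσu : σ u = u⁻¹ := eq_inv_of_mul_eq_one_right hN
      refine ⟨(1 + u)⁻¹, inv_ne_zero h10, ?_⟩
      rw [map_inv₀, map_add, map_one, hσu]
      have hrw : 1 + u⁻¹ = (1 + u) * u⁻¹ := by field_simp; ring
      rw [hrw, mul_inv_rev, inv_inv]
  constructor
  · -- forward
    intro H e he
    obtain ⟨u, hu0, hud⟩ := H e he
    have hσe : σ e = e * u ^ 2 := by rw [← hud]; field_simp
    have hNu : (u * σ u) ^ 2 = 1 := by
      have h1 : σ (σ e) = σ e * (σ u) ^ 2 := by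
        conv_lhs => rw [hσe]
        rw [map_mul, map_pow]
      rw [hσσ, hσe] at h1
      have h2 : e * ((u * σ u) ^ 2) = e * 1 := by linear_combination -h1
      exact mul_left_cancel₀ he h2
    have hsplit : (u * σ u - 1) * (u * σ u + 1) = 0 := by linear_combination hNu
    rcases mul_eq_zero.mp hsplit with h | h
    · obtain ⟨c, hc0, hσc⟩ := hilbert u hu0 (sub_eq_zero.mp h)
      have hkey : σ (e / c ^ 2) = e / c ^ 2 := by
        rw [map_div₀, map_pow, hσe, hσc]
        field_simp
      obtain ⟨p', hp'⟩ := hfixed _ hkey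
      have hp0 : p' ≠ 0 := by
        intro h0
        rw [h0, map_zero] at hp'
        rcases div_eq_zero_iff.mp hp' with h' | h'
        · exact he h'
        · exact pow_ne_zero 2 hc0 h'
      refine ⟨p', 0, c, hp0, hc0, ?_⟩
      have heq : e = algebraMap F E p' * c ^ 2 := by
        rw [← hp']; field_simp
      rw [Fin.val_zero, pow_zero, mul_one]
      exact heq
    · have hNu1 : u * σ u = -1 := eq_neg_of_add_eq_zero_left h
      have hw0 : u / v ≠ 0 := div_ne_zero hu0 hv0
      have hσv0 : σ v ≠ 0 := fun h0 => hv0 (σ.injective (by rw [h0, map_zero]))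
      have hσu0 : σ u ≠ 0 := fun h0 => hu0 (σ.injective (by rw [h0, map_zero]))
      have hNw : (u / v) * σ (u / v) = 1 := by
        rw [map_div₀, div_mul_div_comm, div_eq_one_iff_eq (mul_ne_zero hv0 hσv0)]
        linear_combination hNu1 - hNv
      obtain ⟨c, hc0, hσc⟩ := hilbert _ hw0 hNw
      have hkey : σ (e / (δ * c ^ 2)) = e / (δ * c ^ 2) := by
        rw [map_div₀, map_mul, map_pow, hσe, hσδ, hσc]
        field_simp
      obtain ⟨p', hp'⟩ := hfixed _ hkey
      have hδc : δ * c ^ 2 ≠ 0 := mul_ne_zero hδ0 (pow_ne_zero _ hc0)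
      have hp0 : p' ≠ 0 := by
        intro h0
        rw [h0, map_zero] at hp'
        rcases div_eq_zero_iff.mp hp' with h' | h'
        · exact he h'
        · exact hδc h'
      refine ⟨p', 1, c, hp0, hc0, ?_⟩
      have heq : e = algebraMap F E p' * (δ * c ^ 2) := by
        rw [← hp']; field_simp
      rw [Fin.val_one, pow_one, heq]
      ring
  · -- backward
    intro H e he
    obtain ⟨f, ε, u, hf0, hu0, heq⟩ := H e he
    have hσu0 : σ u ≠ 0 := fun h0 => hu0 (σ.injective (by rw [h0, map_zero]))
    have hAf : algebraMap F E f ≠ 0 := fun h0 => hf0 (hA (by rw [h0, map_zero]))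
    fin_cases ε
    · simp only [Fin.val_zero, pow_zero, mul_one] at heq
      refine ⟨σ u / u, div_ne_zero hσu0 hu0, ?_⟩
      have hσe : σ e = algebraMap F E f * (σ u) ^ 2 := by
        rw [heq, map_mul, map_pow, AlgEquiv.commutes]
      rw [hσe, heq]
      field_simp
    · simp only [Fin.val_one, pow_one] at heq
      refine ⟨v * (σ u / u), mul_ne_zero hv0 (div_ne_zero hσu0 hu0), ?_⟩
      have hσe : σ e = algebraMap F E f * (δ * v ^ 2) * (σ u) ^ 2 := by
        rw [heq, map_mul, map_mul, map_pow, AlgEquiv.commutes, hσδ]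
      rw [hσe, heq]
      field_simp
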